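/- arXiv:1006.1881 — 3 statements merged into one kernel-verified Lean document; each statement's English description precedes it below -/
import Mathlib

section
/- Let M ∆ M' consist of a single alternating path P of even length between two matchings M, M' of a graph with vertex partition V = V_1 ⊔ V_2. If the number of vertices of V_1 covered by M differs from the number covered by M', then one endpoint of P lies in V_1 and the other in V_2, and consequently the number |M_{12}| + |M'_{12}| of cross edges lying on P is odd. -/
open Finset
open scoped Classical symmDiff

/-- `M` is a matching of the simple graph `G`: a finite set of edges of `G`
that are pairwise vertex-disjoint. -/
def IsMatching {V : Type*} (G : SimpleGraph V) (M : Finset (Sym2 V)) : Prop :=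
  ↑M ⊆ G.edgeSet ∧ ∀ v : V, ∀ e ∈ M, ∀ f ∈ M, v ∈ e → v ∈ f → e = f

/-- `v` is covered (matched) by the edge set `M`. -/
def Covers {V : Type*} (M : Finset (Sym2 V)) (v : V) : Prop :=
  ∃ e ∈ M, v ∈ e

/-- Cross edges between `A` and `B`. -/
noncomputable def crossEdges {V : Type*} (A B : Finset V) (M : Finset (Sym2 V)) :
    Finset (Sym2 V) :=
  M.filter (fun e => (∃ v ∈ e, v ∈ A) ∧ (∃ v ∈ e, v ∈ B))

/-- Number of vertices of `A` covered by `M`. -/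
noncomputable def util {V : Type*} (A : Finset V) (M : Finset (Sym2 V)) : ℕ :=
  (A.filter (fun v => ∃ e ∈ M, v ∈ e)).card

section AuxStmt6

set_option linter.unusedSectionVars false
variable {V : Type*} [DecidableEq V] {G : SimpleGraph V}

-- index lemmas
lemma dartFst {a b : V} (q : G.Walk a b) (i : ℕ) (h : i < q.darts.length)
    (h' : i < q.support.length) : q.darts[i].fst = q.support[i] := by
  have h2 : i < (q.darts.map (·.fst)).length := by simpa using h
  have e1 : (q.darts.map (·.fst))[i] = q.darts[i].fst := List.getElem_map _
  have h3 : i < q.support.dropLast.length := by rw [q.map_fst_darts] at h2; exact h2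
  have e2 : q.support.dropLast[i] = q.support[i] := List.getElem_dropLast _
  rw [← e1, ← e2]
  exact List.getElem_of_eq q.map_fst_darts h2

lemma dartSnd {a b : V} (q : G.Walk a b) (i : ℕ) (h : i < q.darts.length)
    (h' : i + 1 < q.support.length) : q.darts[i].snd = q.support[i+1] := by
  have h2 : i < (q.darts.map (·.snd)).length := by simpa using h
  have e1 : (q.darts.map (·.snd))[i] = q.darts[i].snd := List.getElem_map _
  have h3 : i < q.support.tail.length := by rw [q.map_snd_darts] at h2; exact h2
  have e2 : q.support.tail[i] = q.support[i+1] := List.getElem_tail _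
  rw [← e1, ← e2]
  exact List.getElem_of_eq q.map_snd_darts h2

lemma edgeDart {a b : V} (q : G.Walk a b) (i : ℕ) (h : i < q.edges.length)
    (h' : i < q.darts.length) : q.edges[i] = q.darts[i].edge := by
  have h2 : i < (q.darts.map SimpleGraph.Dart.edge).length := by simpa using h'
  have := (List.getElem_map (l := q.darts) SimpleGraph.Dart.edge (h := h2))
  simpa [SimpleGraph.Walk.edges] using this

lemma memDartEdge {d : G.Dart} {w : V} : w ∈ d.edge ↔ w = d.fst ∨ w = d.snd := by
  show w ∈ s(d.fst, d.snd) ↔ _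
  rw [Sym2.mem_iff]

lemma supportZero {a b : V} (q : G.Walk a b) (h : 0 < q.support.length) :
    q.support[0] = a := by
  cases q with
  | nil => rfl
  | cons h q => rfl

lemma supportLast {a b : V} (q : G.Walk a b) (h : q.length < q.support.length) :
    q.support[q.length] = b := by
  have h1 : q.support ≠ [] := by
    intro hc
    have := q.length_support
    simp [hc] at this
  have := q.getLast_support
  rw [List.getLast_eq_getElem] at this
  convert this using 2
  rw [q.length_support]
  omega

lemma crossSym2 (V₁ V₂ : Finset V) (hpart : ∀ x : V, x ∈ V₁ ∨ x ∈ V₂)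
    (hdisj : Disjoint V₁ V₂) (x y : V) :
    ((∃ z ∈ s(x,y), z ∈ V₁) ∧ (∃ z ∈ s(x,y), z ∈ V₂)) ↔ ¬(x ∈ V₁ ↔ y ∈ V₁) := by
  have hx := hpart x
  have hy := hpart y
  have dx : x ∈ V₁ → x ∉ V₂ := fun h h2 => (Finset.disjoint_left.mp hdisj h h2)
  have dy : y ∈ V₁ → y ∉ V₂ := fun h h2 => (Finset.disjoint_left.mp hdisj h h2)
  simp only [Sym2.mem_iff, exists_eq_or_imp, exists_eq_left]
  constructor
  · rintro ⟨h1 | h1, h2 | h2⟩ <;> tauto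
  · intro h; tauto

lemma countPcross (V₁ V₂ : Finset V) (hpart : ∀ x : V, x ∈ V₁ ∨ x ∈ V₂)
    (hdisj : Disjoint V₁ V₂) :
    ∀ {a b : V} (q : G.Walk a b),
    (Even (q.edges.countP
      (fun e => decide ((∃ z ∈ e, z ∈ V₁) ∧ (∃ z ∈ e, z ∈ V₂)))) ↔ (a ∈ V₁ ↔ b ∈ V₁)) := by
  intro a b q
  induction q with
  | nil => simp
  | @cons a w c h q ih =>
    rw [SimpleGraph.Walk.edges_cons, List.countP_cons]
    have hcs := crossSym2 V₁ V₂ hpart hdisj a w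
    by_cases hcr : ((∃ z ∈ s(a,w), z ∈ V₁) ∧ (∃ z ∈ s(a,w), z ∈ V₂))
    · rw [decide_eq_true hcr, if_pos rfl, Nat.even_add_one, ih]
      rw [hcs] at hcr
      tauto
    · rw [decide_eq_false hcr]
      simp only [Bool.false_eq_true, if_false, add_zero]
      rw [ih]
      rw [hcs, not_not] at hcr
      tauto

lemma cardFilterToFinset (l : List (Sym2 V)) (hl : l.Nodup) (P : Sym2 V → Prop)
    [DecidablePred P] :
    (l.toFinset.filter P).card = l.countP (fun a => decide (P a)) := by
  rw [List.countP_eq_length_filter]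
  have he : l.toFinset.filter P = (l.filter (fun a => decide (P a))).toFinset := by
    ext e
    simp only [Finset.mem_filter, List.mem_toFinset, List.mem_filter, decide_eq_true_eq]
  rw [he, List.toFinset_card_of_nodup (hl.filter _)]

lemma altEven {u v : V} (p : G.Walk u v) (M M' : Finset (Sym2 V))
    (hsd : ∀ e : Sym2 V, e ∈ p.edges ↔ e ∈ M ∆ M')
    (halt : ∀ (k : ℕ) (hk : k + 1 < p.edges.length),
      (p.edges.get ⟨k, Nat.lt_of_succ_lt hk⟩ ∈ M ↔ p.edges.get ⟨k + 1, hk⟩ ∈ M'))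
    (h0 : 0 < p.edges.length) :
    ∀ i (hi : i < p.edges.length), (p.edges[i] ∈ M ↔ (p.edges[0] ∈ M ↔ Even i)) := by
  have hmem : ∀ j (hj : j < p.edges.length), (p.edges[j] ∈ M ↔ p.edges[j] ∉ M') := by
    intro j hj
    have := (hsd p.edges[j]).mp (List.getElem_mem hj)
    rw [Finset.mem_symmDiff] at this
    tauto
  intro i
  induction i with
  | zero => intro hi; simp
  | succ k ih =>
    intro hi
    have hk : k < p.edges.length := Nat.lt_of_succ_lt hi
    have h1 := halt k (by simpa using hi)
    simp only [List.get_eq_getElem] at h1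
    have h2 := hmem k hk
    have h3 := hmem (k+1) hi
    have h4 := ih hk
    rw [Nat.even_add_one]
    tauto

lemma headEdge {u v : V} (p : G.Walk u v) (hp : p.IsPath) (hl : 0 < p.length) :
    ∃ h0 : 0 < p.edges.length, u ∈ p.edges[0] ∧
      (∀ e ∈ p.edges, u ∈ e → e = p.edges[0]) := by
  cases p with
  | nil => simp at hl
  | @cons _ w _ h q =>
    rw [SimpleGraph.Walk.cons_isPath_iff] at hp
    refine ⟨by simp, by simp, ?_⟩
    intro e he hue
    rw [SimpleGraph.Walk.edges_cons, List.mem_cons] at he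
    rcases he with rfl | he
    · simp
    · exfalso
      induction e with
      | h x y =>
        rw [Sym2.mem_iff] at hue
        rcases hue with rfl | rfl
        · exact hp.2 (q.fst_mem_support_of_mem_edges he)
        · exact hp.2 (q.snd_mem_support_of_mem_edges he)

lemma interiorCov {u v : V} (p : G.Walk u v) (hp : p.IsPath) (M M' : Finset (Sym2 V))
    (hsd : ∀ e : Sym2 V, e ∈ p.edges ↔ e ∈ M ∆ M')
    (halt : ∀ (k : ℕ) (hk : k + 1 < p.edges.length),
      (p.edges.get ⟨k, Nat.lt_of_succ_lt hk⟩ ∈ M ↔ p.edges.get ⟨k + 1, hk⟩ ∈ M'))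
    {w : V} (hwu : w ≠ u) (hwv : w ≠ v) : Covers M w → Covers M' w := by
  rintro ⟨f, hfM, hwf⟩
  by_cases hfM' : f ∈ M'
  · exact ⟨f, hfM', hwf⟩
  have hmem : ∀ j (hj : j < p.edges.length), (p.edges[j] ∈ M ↔ p.edges[j] ∉ M') := by
    intro j hj
    have := (hsd p.edges[j]).mp (List.getElem_mem hj)
    rw [Finset.mem_symmDiff] at this
    tauto
  have hfp : f ∈ p.edges := (hsd f).mpr (by rw [Finset.mem_symmDiff]; tauto)
  obtain ⟨i, hi, hif⟩ := List.getElem_of_mem hfp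
  have hle : p.edges.length = p.length := p.length_edges
  have hldl : p.darts.length = p.length := p.length_darts
  have hld : i < p.darts.length := by omega
  have hsup : p.support.length = p.length + 1 := p.length_support
  have hed : p.edges[i] = p.darts[i].edge := edgeDart p i hi hld
  have hwf' : w ∈ p.darts[i].edge := by rw [← hed, hif]; exact hwf
  rw [memDartEdge] at hwf'
  rcases hwf' with hw | hw
  · -- w = darts[i].fst = support[i]
    have hwsup : w = p.support[i]'(by omega) := by rw [hw]; exact dartFst p i hld (by omega)
    rcases Nat.eq_zero_or_pos i with rfl | hipos
    · exact absurd (hwsup.trans (supportZero p (by omega))) hwu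
    · have hj : i - 1 + 1 < p.edges.length := by omega
      have h1 := halt (i-1) hj
      simp only [List.get_eq_getElem] at h1
      have hi1 : i - 1 + 1 = i := by omega
      simp only [hi1] at h1
      have hiM : p.edges[i] ∈ M := by rw [hif]; exact hfM
      have hiM' : p.edges[i] ∉ M' := by rw [hif]; exact hfM'
      have hprev : p.edges[i-1]'(by omega) ∈ M' := by
        have := hmem (i-1) (by omega)
        tauto
      refine ⟨p.edges[i-1]'(by omega), hprev, ?_⟩
      have hldp : i - 1 < p.darts.length := by omega
      have he2 : p.edges[i-1]'(by omega) = (p.darts[i-1]'hldp).edge := edgeDart p (i-1) (by omega) hldp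
      rw [he2, memDartEdge]
      right
      rw [dartSnd p (i-1) hldp (by omega), hwsup]
      congr 1 <;> omega
  · -- w = darts[i].snd = support[i+1]
    have hwsup : w = p.support[i+1]'(by omega) := by rw [hw]; exact dartSnd p i hld (by omega)
    rcases eq_or_lt_of_le (Nat.succ_le_of_lt (hle ▸ hi)) with hlast | hlt
    · exfalso
      apply hwv
      rw [hwsup]
      have := supportLast p (by omega)
      convert this using 2 <;> omega
    · have hj : i + 1 < p.edges.length := by omega
      have h1 := halt i hj
      simp only [List.get_eq_getElem] at h1
      have hiM : p.edges[i] ∈ M := by rw [hif]; exact hfM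
      have hnext : p.edges[i+1] ∈ M' := h1.mp hiM
      refine ⟨p.edges[i+1], hnext, ?_⟩
      have hldp : i + 1 < p.darts.length := by omega
      have he2 : p.edges[i+1] = p.darts[i+1].edge := edgeDart p (i+1) hj hldp
      rw [he2, memDartEdge]
      left
      rw [dartFst p (i+1) hldp (by omega)]
      exact hwsup

lemma countStep (V₁ : Finset V) (M M' : Finset (Sym2 V)) {u v : V}
    (hcov : ∀ w : V, w ≠ u → w ≠ v → (Covers M w ↔ Covers M' w))
    (cu : Covers M u) (cu' : ¬ Covers M' u) (cv' : Covers M' v) (cv : ¬ Covers M v)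
    (hneq : (V₁.filter (fun w => ∃ e ∈ M, w ∈ e)).card ≠
      (V₁.filter (fun w => ∃ e ∈ M', w ∈ e)).card) :
    ¬(u ∈ V₁ ↔ v ∈ V₁) := by
  intro hiff
  apply hneq
  have huv : u ≠ v := by rintro rfl; exact cv cu
  have cu2 : ∃ e ∈ M, u ∈ e := cu
  have cu2' : ¬ ∃ e ∈ M', u ∈ e := cu'
  have cv2' : ∃ e ∈ M', v ∈ e := cv'
  have cv2 : ¬ ∃ e ∈ M, v ∈ e := cv
  by_cases hu : u ∈ V₁
  · have hv : v ∈ V₁ := hiff.mp hu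
    have huS : u ∈ V₁.filter (fun w => ∃ e ∈ M, w ∈ e) := Finset.mem_filter.mpr ⟨hu, cu2⟩
    have hvS' : v ∈ V₁.filter (fun w => ∃ e ∈ M', w ∈ e) := Finset.mem_filter.mpr ⟨hv, cv2'⟩
    have key : (V₁.filter (fun w => ∃ e ∈ M, w ∈ e)).erase u
        = (V₁.filter (fun w => ∃ e ∈ M', w ∈ e)).erase v := by
      ext w
      simp only [Finset.mem_erase, Finset.mem_filter]
      by_cases hwu : w = u
      · subst hwu; simp [cu2']
      · by_cases hwv : w = v
        · subst hwv; simp [cv2]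
        · have hc := hcov w hwu hwv
          have hc2 : (∃ e ∈ M, w ∈ e) ↔ (∃ e ∈ M', w ∈ e) := hc
          constructor
          · rintro ⟨_, h1, h2⟩; exact ⟨hwv, h1, hc2.mp h2⟩
          · rintro ⟨_, h1, h2⟩; exact ⟨hwu, h1, hc2.mpr h2⟩
    rw [← Finset.card_erase_add_one huS, ← Finset.card_erase_add_one hvS', key]
  · have hv : v ∉ V₁ := fun h => hu (hiff.mpr h)
    congr 1
    ext w
    simp only [Finset.mem_filter]
    by_cases hwu : w = u
    · subst hwu; simp [hu]
    · by_cases hwv : w = v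
      · subst hwv; simp [hv]
      · have hc2 : (∃ e ∈ M, w ∈ e) ↔ (∃ e ∈ M', w ∈ e) := hcov w hwu hwv
        rw [hc2]

lemma sideSplit (V₁ V₂ : Finset V) (hpart : ∀ x : V, x ∈ V₁ ∨ x ∈ V₂)
    (hdisj : Disjoint V₁ V₂) (u v : V) (hkey : ¬ (u ∈ V₁ ↔ v ∈ V₁)) :
    (u ∈ V₁ ∧ v ∈ V₂) ∨ (u ∈ V₂ ∧ v ∈ V₁) := by
  have hu := hpart u
  have hv := hpart v
  have d1 : ∀ x : V, x ∈ V₁ → x ∉ V₂ := fun x h h2 => Finset.disjoint_left.mp hdisj h h2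
  by_cases h1 : u ∈ V₁ <;> by_cases h2 : v ∈ V₁ <;> tauto

lemma oddCross {u v : V} (V₁ V₂ : Finset V) (hpart : ∀ x : V, x ∈ V₁ ∨ x ∈ V₂)
    (hdisj : Disjoint V₁ V₂) (M M' : Finset (Sym2 V)) (p : G.Walk u v) (hp : p.IsPath)
    (hsd : ∀ e : Sym2 V, e ∈ p.edges ↔ e ∈ M ∆ M')
    (hkey : ¬ (u ∈ V₁ ↔ v ∈ V₁)) :
    Odd ((crossEdges V₁ V₂ (M \ M')).card + (crossEdges V₁ V₂ (M' \ M)).card) := by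
  have hnodup : p.edges.Nodup := hp.isTrail.edges_nodup
  have hdisjMM : Disjoint (M \ M') (M' \ M) := disjoint_sdiff_sdiff
  have hcards : (crossEdges V₁ V₂ (M \ M')).card + (crossEdges V₁ V₂ (M' \ M)).card
      = ((M ∆ M').filter (fun e => (∃ z ∈ e, z ∈ V₁) ∧ (∃ z ∈ e, z ∈ V₂))).card := by
    rw [crossEdges, crossEdges,
      ← Finset.card_union_of_disjoint (Finset.disjoint_filter_filter hdisjMM),
      ← Finset.filter_union]
    congr 1
  have hMMfin : M ∆ M' = p.edges.toFinset := by
    ext e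
    rw [← hsd e, List.mem_toFinset]
  rw [hcards, hMMfin,
    cardFilterToFinset p.edges hnodup (fun e => (∃ z ∈ e, z ∈ V₁) ∧ (∃ z ∈ e, z ∈ V₂)),
    ← Nat.not_even_iff_odd]
  rw [countPcross V₁ V₂ hpart hdisj p]
  exact hkey


end AuxStmt6

set_option maxHeartbeats 1600000 in
/-- If `M ∆ M'` is a single alternating path `P` of even length, and the number of
vertices of `V₁` covered by `M` differs from the number covered by `M'`, then one
endpoint of `P` lies in `V₁` and the other in `V₂`, and the number of cross edges of
`M` and `M'` lying on `P` is odd. -/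
theorem stmt_6 {V : Type*} [DecidableEq V] (G : SimpleGraph V) (V₁ V₂ : Finset V)
    (hpart : ∀ v : V, v ∈ V₁ ∨ v ∈ V₂) (hdisj : Disjoint V₁ V₂)
    (M M' : Finset (Sym2 V)) (hM : IsMatching G M) (hM' : IsMatching G M')
    (u v : V) (p : G.Walk u v) (hp : p.IsPath)
    (hsd : ∀ e : Sym2 V, e ∈ p.edges ↔ e ∈ M ∆ M')
    (halt : ∀ (k : ℕ) (hk : k + 1 < p.edges.length),
      (p.edges.get ⟨k, Nat.lt_of_succ_lt hk⟩ ∈ M ↔ p.edges.get ⟨k + 1, hk⟩ ∈ M'))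
    (heven : Even p.length)
    (hneq : util V₁ M ≠ util V₁ M') :
    ((u ∈ V₁ ∧ v ∈ V₂) ∨ (u ∈ V₂ ∧ v ∈ V₁)) ∧
    Odd ((crossEdges V₁ V₂ (M \ M')).card + (crossEdges V₁ V₂ (M' \ M)).card) := by
  classical
  have hneq2 : (V₁.filter (fun w => ∃ e ∈ M, w ∈ e)).card ≠
      (V₁.filter (fun w => ∃ e ∈ M', w ∈ e)).card := by
    have e1 : util V₁ M = (V₁.filter (fun w => ∃ e ∈ M, w ∈ e)).card := by
      unfold util
      exact congrArg Finset.card (Finset.filter_congr_decidable _ _ _)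
    have e2 : util V₁ M' = (V₁.filter (fun w => ∃ e ∈ M', w ∈ e)).card := by
      unfold util
      exact congrArg Finset.card (Finset.filter_congr_decidable _ _ _)
    rw [← e1, ← e2]
    exact hneq
  -- length is positive
  by_cases hl0 : p.length = 0
  · exfalso
    apply hneq
    have he : p.edges = [] := List.eq_nil_of_length_eq_zero (by rw [p.length_edges, hl0])
    have hMM : M ∆ M' = ∅ := by
      ext e
      have := (hsd e)
      rw [he] at this
      simpa using fun h => this.mpr h
    have : M = M' := by
      have := symmDiff_eq_bot.mp (by simpa using hMM)
      exact this
    rw [this]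
  have hl : 0 < p.length := Nat.pos_of_ne_zero hl0
  have hle : p.edges.length = p.length := p.length_edges
  have h0 : 0 < p.edges.length := by omega
  -- symmetric-difference membership facts
  have hmem : ∀ e ∈ p.edges, (e ∈ M ↔ e ∉ M') ∧ (e ∈ M ∨ e ∈ M') := by
    intro e he
    have := (hsd e).mp he
    rw [Finset.mem_symmDiff] at this
    tauto
  -- swapped alternation
  have halt' : ∀ (k : ℕ) (hk : k + 1 < p.edges.length),
      (p.edges.get ⟨k, Nat.lt_of_succ_lt hk⟩ ∈ M' ↔ p.edges.get ⟨k + 1, hk⟩ ∈ M) := by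
    intro k hk
    have h1 := halt k hk
    have h2 := hmem (p.edges.get ⟨k, Nat.lt_of_succ_lt hk⟩) (by apply List.get_mem)
    have h3 := hmem (p.edges.get ⟨k + 1, hk⟩) (by apply List.get_mem)
    tauto
  have hsd' : ∀ e : Sym2 V, e ∈ p.edges ↔ e ∈ M' ∆ M := by
    intro e; rw [hsd, symmDiff_comm]
  -- covered equivalence away from endpoints
  have hcovgen : ∀ w : V, w ≠ u → w ≠ v → (Covers M w ↔ Covers M' w) := by
    intro w h1 h2
    exact ⟨interiorCov p hp M M' hsd halt h1 h2, interiorCov p hp M' M hsd' halt' h1 h2⟩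
  -- endpoint edges
  obtain ⟨h0', hu0, huniq⟩ := headEdge p hp hl
  have hpr : p.reverse.IsPath := hp.reverse
  have hlr : 0 < p.reverse.length := by rwa [SimpleGraph.Walk.length_reverse]
  obtain ⟨h0r, hv0, hvuniq⟩ := headEdge p.reverse hpr hlr
  have hrev : p.reverse.edges = p.edges.reverse := p.edges_reverse
  have hlastidx : p.reverse.edges[0]'h0r = p.edges[p.edges.length - 1]'(by omega) := by
    have e1 : p.reverse.edges[0]'h0r = p.edges.reverse[0]'(by rw [← hrev]; exact h0r) :=
      List.getElem_of_eq hrev h0r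
    rw [e1, List.getElem_reverse]
    congr 1 <;> omega
  have hmemrev : ∀ e : Sym2 V, e ∈ p.reverse.edges ↔ e ∈ p.edges := by
    intro e; rw [hrev, List.mem_reverse]
  rw [hlastidx] at hv0 hvuniq
  -- alternation along the path
  have altE := altEven p M M' hsd halt h0
  have hoddlast : ¬ Even (p.edges.length - 1) := by
    obtain ⟨m, hm⟩ := heven
    rintro ⟨k, hk⟩
    omega
  have hlastM := altE (p.edges.length - 1) (by omega)
  have h0mem := hmem (p.edges[0]'h0) (List.getElem_mem h0)
  have hlmem := hmem (p.edges[p.edges.length - 1]'(by omega)) (List.getElem_mem (by omega))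
  -- key: endpoints lie on opposite sides
  have hkey : ¬ (u ∈ V₁ ↔ v ∈ V₁) := by
    by_cases h0M : p.edges[0]'h0 ∈ M
    · -- first edge in M, last edge in M'
      have h0M' : p.edges[0]'h0 ∉ M' := h0mem.1.mp h0M
      have hlM : p.edges[p.edges.length - 1]'(by omega) ∉ M :=
        fun h => hoddlast ((hlastM.mp h).mp h0M)
      have hlM' : p.edges[p.edges.length - 1]'(by omega) ∈ M' := hlmem.2.resolve_left hlM
      have cu : Covers M u := ⟨_, h0M, hu0⟩
      have cv' : Covers M' v := ⟨_, hlM', hv0⟩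
      have cu' : ¬ Covers M' u := by
        rintro ⟨f, hfM', huf⟩
        by_cases hfM : f ∈ M
        · have := hM.2 u _ h0M f hfM hu0 huf
          rw [this] at h0M'
          exact h0M' hfM'
        · have hfp : f ∈ p.edges := (hsd f).mpr (by rw [Finset.mem_symmDiff]; tauto)
          have := huniq f hfp huf
          rw [this] at hfM'
          exact h0M' hfM'
      have cv : ¬ Covers M v := by
        rintro ⟨f, hfM, hvf⟩
        by_cases hfM' : f ∈ M'
        · have := hM'.2 v _ hlM' f hfM' hv0 hvf
          rw [this] at hlM
          exact hlM hfM
        · have hfp : f ∈ p.edges := (hsd f).mpr (by rw [Finset.mem_symmDiff]; tauto)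
          have := hvuniq f ((hmemrev f).mpr hfp) hvf
          rw [this] at hfM
          exact hlM hfM
      exact countStep V₁ M M' hcovgen cu cu' cv' cv hneq2
    · -- first edge in M', last edge in M
      have h0M' : p.edges[0]'h0 ∈ M' := h0mem.2.resolve_left h0M
      have hlM : p.edges[p.edges.length - 1]'(by omega) ∈ M :=
        hlastM.mpr (iff_of_false h0M hoddlast)
      have hlM' : p.edges[p.edges.length - 1]'(by omega) ∉ M' :=
        fun h => (hlmem.1.mp hlM) h
      have cu : Covers M' u := ⟨_, h0M', hu0⟩
      have cv' : Covers M v := ⟨_, hlM, hv0⟩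
      have cu' : ¬ Covers M u := by
        rintro ⟨f, hfM, huf⟩
        by_cases hfM' : f ∈ M'
        · have := hM'.2 u _ h0M' f hfM' hu0 huf
          rw [this] at h0M
          exact h0M hfM
        · have hfp : f ∈ p.edges := (hsd f).mpr (by rw [Finset.mem_symmDiff]; tauto)
          have := huniq f hfp huf
          rw [this] at hfM
          exact h0M hfM
      have cv : ¬ Covers M' v := by
        rintro ⟨f, hfM', hvf⟩
        by_cases hfM : f ∈ M
        · have := hM.2 v _ hlM f hfM hv0 hvf
          rw [this] at hlM'
          exact hlM' hfM'
        · have hfp : f ∈ p.edges := (hsd f).mpr (by rw [Finset.mem_symmDiff]; tauto)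
          have := hvuniq f ((hmemrev f).mpr hfp) hvf
          rw [this] at hfM'
          exact hlM' hfM'
      exact countStep V₁ M' M (fun w h1 h2 => (hcovgen w h1 h2).symm) cu cu' cv' cv
        (fun h => hneq2 h.symm)
  exact ⟨sideSplit V₁ V₂ hpart hdisj u v hkey, oddCross V₁ V₂ hpart hdisj M M' p hp hsd hkey⟩
end

section
/- Let G be a graph with vertex partition V = V_1 ∪ … ∪ V_n, let M* be a maximum cardinality matching of G, and for each i let M_i** be a maximum cardinality matching of G[V_i]. Then there exists a matching M' of G such that M' restricts to a maximum cardinality matching on each G[V_i] and Σ_i |M'_{ii}| + (1/2) Σ_{i<j} |M'_{ij}| ≥ Σ_i |M*_{ii}| + (1/2) Σ_{i<j} |M*_{ij}|. -/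
open Finset
open scoped Classical symmDiff

set_option linter.unusedSectionVars false
set_option maxHeartbeats 1000000

/-- Internal edges of agent `i`. -/
noncomputable def internalEdges {V : Type*} {n : ℕ} (parts : Fin n → Finset V)
    (i : Fin n) (M : Finset (Sym2 V)) : Finset (Sym2 V) :=
  M.filter (fun e => ∀ v ∈ e, v ∈ parts i)

/-- External edges of `M` between `V_i` and `V_j`. -/
noncomputable def externalEdges {V : Type*} {n : ℕ} (parts : Fin n → Finset V)
    (i j : Fin n) (M : Finset (Sym2 V)) : Finset (Sym2 V) :=
  M.filter (fun e => (∃ v ∈ e, v ∈ parts i) ∧ (∃ v ∈ e, v ∈ parts j))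

namespace Stmt7Aux
variable {V : Type*} [DecidableEq V]

def everts : Sym2 V → Finset V := Sym2.lift ⟨fun x y => {x, y}, fun x y => Finset.pair_comm x y⟩

@[simp] lemma mem_everts {v : V} {e : Sym2 V} : v ∈ everts e ↔ v ∈ e := by
  induction e using Sym2.ind with
  | _ x y => simp [everts, Sym2.mem_iff]

lemma card_everts {e : Sym2 V} (h : ¬ e.IsDiag) : (everts e).card = 2 := by
  induction e using Sym2.ind with
  | _ x y =>
    rw [Sym2.mk_isDiag_iff] at h
    simpa [everts] using Finset.card_pair h

def PM (M : Finset (Sym2 V)) : Prop :=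
  (∀ e ∈ M, ¬ e.IsDiag) ∧ ∀ v : V, ∀ e ∈ M, ∀ f ∈ M, v ∈ e → v ∈ f → e = f

lemma PM.eq {M : Finset (Sym2 V)} (h : PM M) {e f : Sym2 V} {v : V}
    (he : e ∈ M) (hf : f ∈ M) (hve : v ∈ e) (hvf : v ∈ f) : e = f :=
  h.2 v e he f hf hve hvf

lemma PM.subset {M A : Finset (Sym2 V)} (hs : A ⊆ M) (h : PM M) : PM A :=
  ⟨fun e he => h.1 e (hs he), fun v e he f hf hve hvf => h.2 v e (hs he) f (hs hf) hve hvf⟩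

noncomputable def cov (M : Finset (Sym2 V)) : Finset V := M.biUnion everts

lemma mem_cov {v : V} {M : Finset (Sym2 V)} : v ∈ cov M ↔ ∃ e ∈ M, v ∈ e := by
  simp [cov]

lemma cov_mono {A B : Finset (Sym2 V)} (h : A ⊆ B) : cov A ⊆ cov B := by
  intro v hv
  rw [mem_cov] at hv ⊢
  obtain ⟨e, he, hve⟩ := hv
  exact ⟨e, h he, hve⟩

lemma cov_card {M : Finset (Sym2 V)} (h : PM M) : (cov M).card = 2 * M.card := by
  rw [cov, Finset.card_biUnion]
  · rw [Finset.sum_congr rfl (fun e he => card_everts (h.1 e he)), Finset.sum_const,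
      smul_eq_mul, mul_comm]
  · intro e he f hf hne
    rw [Function.onFun, Finset.disjoint_left]
    intro v hv hvf
    exact hne (h.eq he hf (mem_everts.mp hv) (mem_everts.mp hvf))

/-- PM of an insert given new edge is vertex-disjoint from the rest. -/
lemma PM.insert {M : Finset (Sym2 V)} (h : PM M) {e : Sym2 V} (hd : ¬ e.IsDiag)
    (hdisj : ∀ v ∈ e, v ∉ cov M) : PM (insert e M) := by
  constructor
  · intro f hf
    rcases Finset.mem_insert.mp hf with rfl | hf
    · exact hd
    · exact h.1 f hf
  · intro v f hf g hg hvf hvg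
    rcases Finset.mem_insert.mp hf with hf' | hf'
    · rcases Finset.mem_insert.mp hg with hg' | hg'
      · rw [hf', hg']
      · exact absurd (mem_cov.mpr ⟨g, hg', hvg⟩) (hdisj v (hf' ▸ hvf))
    · rcases Finset.mem_insert.mp hg with hg' | hg'
      · exact absurd (mem_cov.mpr ⟨f, hf', hvf⟩) (hdisj v (hg' ▸ hvg))
      · exact h.2 v f hf' g hg' hvf hvg

lemma not_mem_of_disj {M : Finset (Sym2 V)} {e : Sym2 V} (hd : ¬ e.IsDiag)
    (hdisj : ∀ v ∈ e, v ∉ cov M) : e ∉ M := by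
  intro he
  induction e using Sym2.ind with
  | _ x y => exact hdisj x (by simp [Sym2.mem_iff]) (mem_cov.mpr ⟨_, he, by simp [Sym2.mem_iff]⟩)

/-- The augmenting lemma. -/
lemma aug : ∀ (k : ℕ) (A N : Finset (Sym2 V)), A.card + N.card ≤ k →
    PM A → PM N → A.card < N.card →
    ∃ A' : Finset (Sym2 V), PM A' ∧ A' ⊆ A ∪ N ∧ A'.card = A.card + 1 ∧ cov A ⊆ cov A' := by
  intro k
  induction k with
  | zero => intro A N hk _ _ hlt; omega
  | succ k ih =>
    intro A N hk hA hN hlt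
    by_cases hcom : ∃ e, e ∈ A ∧ e ∈ N
    · -- common edge: remove it, recurse, put it back
      obtain ⟨e, heA, heN⟩ := hcom
      have hAc : 1 ≤ A.card := Finset.card_pos.mpr ⟨e, heA⟩
      obtain ⟨A2, hA2pm, hA2sub, hA2card, hA2cov⟩ :=
        ih (A.erase e) (N.erase e)
          (by rw [Finset.card_erase_of_mem heA, Finset.card_erase_of_mem heN]; omega)
          (hA.subset (Finset.erase_subset _ _)) (hN.subset (Finset.erase_subset _ _))
          (by rw [Finset.card_erase_of_mem heA, Finset.card_erase_of_mem heN]; omega)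
      have hdisj : ∀ v ∈ e, v ∉ cov A2 := by
        intro v hv hvc
        obtain ⟨f, hf, hvf⟩ := mem_cov.mp hvc
        rcases Finset.mem_union.mp (hA2sub hf) with hf' | hf'
        · exact (Finset.mem_erase.mp hf').1 (hA.eq (Finset.mem_erase.mp hf').2 heA hvf hv)
        · exact (Finset.mem_erase.mp hf').1 (hN.eq (Finset.mem_erase.mp hf').2 heN hvf hv)
      have hnd : ¬ e.IsDiag := hA.1 e heA
      have heA2 : e ∉ A2 := not_mem_of_disj hnd hdisj
      refine ⟨insert e A2, hA2pm.insert hnd hdisj, ?_, ?_, ?_⟩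
      · intro f hf
        rcases Finset.mem_insert.mp hf with rfl | hf
        · exact Finset.mem_union_left _ heA
        · rcases Finset.mem_union.mp (hA2sub hf) with hf' | hf'
          · exact Finset.mem_union_left _ (Finset.erase_subset _ _ hf')
          · exact Finset.mem_union_right _ (Finset.erase_subset _ _ hf')
      · rw [Finset.card_insert_of_notMem heA2, hA2card, Finset.card_erase_of_mem heA]; omega
      · intro v hv
        obtain ⟨f, hf, hvf⟩ := mem_cov.mp hv
        by_cases hfe : f = e
        · exact mem_cov.mpr ⟨e, Finset.mem_insert_self _ _, hfe ▸ hvf⟩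
        · have : v ∈ cov A2 := hA2cov (mem_cov.mpr ⟨f, Finset.mem_erase.mpr ⟨hfe, hf⟩, hvf⟩)
          exact cov_mono (Finset.subset_insert _ _) this
    · by_cases hfree : ∃ e ∈ N, ∀ v ∈ e, v ∉ cov A
      · -- free edge: just add it
        obtain ⟨e, heN, hdisj⟩ := hfree
        have hnd : ¬ e.IsDiag := hN.1 e heN
        have heA : e ∉ A := not_mem_of_disj hnd (by
          intro v hv; exact hdisj v hv)
        refine ⟨insert e A, hA.insert hnd hdisj, ?_, ?_, cov_mono (Finset.subset_insert _ _)⟩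
        · intro f hf
          rcases Finset.mem_insert.mp hf with rfl | hf
          · exact Finset.mem_union_right _ heN
          · exact Finset.mem_union_left _ hf
        · rw [Finset.card_insert_of_notMem heA]
      · -- every N-edge meets cov A; find x ∈ cov N \ cov A and trace the alternating step
        push_neg at hfree
        have hxe : ∃ x, x ∈ cov N ∧ x ∉ cov A := by
          by_contra hc
          push_neg at hc
          have hsub : cov N ⊆ cov A := fun v hv => hc v hv
          have := Finset.card_le_card hsub
          rw [cov_card hA, cov_card hN] at this
          omega
        obtain ⟨x, hxN, hxA⟩ := hxe
        obtain ⟨e, heN, hxe⟩ := mem_cov.mp hxN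
        obtain ⟨y, rfl⟩ := Sym2.mem_iff_exists.mp hxe
        have hxy : x ≠ y := by
          have := hN.1 _ heN; rwa [Sym2.mk_isDiag_iff] at this
        -- e meets cov A, and not at x, so y ∈ cov A
        obtain ⟨v0, hv0e, hv0A⟩ := hfree _ heN
        have hyA : y ∈ cov A := by
          rcases Sym2.mem_iff.mp hv0e with rfl | rfl
          · exact absurd hv0A hxA
          · exact hv0A
        obtain ⟨a, haA, hya⟩ := mem_cov.mp hyA
        obtain ⟨z, rfl⟩ := Sym2.mem_iff_exists.mp hya
        have hyz : y ≠ z := by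
          have := hA.1 _ haA; rwa [Sym2.mk_isDiag_iff] at this
        have hxz : x ≠ z := by
          rintro rfl
          exact hxA (mem_cov.mpr ⟨_, haA, by simp [Sym2.mem_iff]⟩)
        have hAc : 1 ≤ A.card := Finset.card_pos.mpr ⟨_, haA⟩
        have hand : ¬ (s(y,z)).IsDiag := hA.1 _ haA
        have hend : ¬ (s(x,y)).IsDiag := hN.1 _ heN
        by_cases hzN : z ∈ cov N
        · -- z is N-covered: contract the path x-y-z-w to a pseudo-edge s(x,w)
          obtain ⟨f, hfN, hzf⟩ := mem_cov.mp hzN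
          obtain ⟨w, rfl⟩ := Sym2.mem_iff_exists.mp hzf
          have hfnd : ¬ (s(z,w)).IsDiag := hN.1 _ hfN
          have hzw : z ≠ w := by rwa [Sym2.mk_isDiag_iff] at hfnd
          have hfe : s(z,w) ≠ s(x,y) := by
            intro h
            have hz : z ∈ s(x,y) := by rw [← h]; simp
            rcases Sym2.mem_iff.mp hz with h' | h'
            · exact hxz h'.symm
            · exact hyz h'.symm
          have hxf : x ∉ s(z,w) := fun hx => hfe (hN.eq hfN heN hx (by simp))
          have hyf : y ∉ s(z,w) := fun hy => hfe (hN.eq hfN heN hy (by simp))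
          have hxw : x ≠ w := fun h => hxf (by simp [h])
          have hgnd : ¬ (s(x,w)).IsDiag := by rwa [Sym2.mk_isDiag_iff]
          set Nb : Finset (Sym2 V) := (N.erase s(x,y)).erase s(z,w) with hNb
          have hNbN : Nb ⊆ N := (Finset.erase_subset _ _).trans (Finset.erase_subset _ _)
          have hgdisj : ∀ v ∈ s(x,w), v ∉ cov Nb := by
            intro v hv hvc
            obtain ⟨h', hh', hvh'⟩ := mem_cov.mp hvc
            have hne := Finset.mem_erase.mp hh'
            have hne2 := Finset.mem_erase.mp hne.2
            rcases Sym2.mem_iff.mp hv with rfl | rfl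
            · exact hne2.1 (hN.eq hne2.2 heN hvh' (by simp))
            · exact hne.1 (hN.eq hne2.2 hfN hvh' (by simp))
          have hgNb : s(x,w) ∉ Nb := not_mem_of_disj hgnd hgdisj
          have hfNe : s(z,w) ∈ N.erase s(x,y) := Finset.mem_erase.mpr ⟨hfe, hfN⟩
          have hNbcard : Nb.card = N.card - 2 := by
            rw [hNb, Finset.card_erase_of_mem hfNe, Finset.card_erase_of_mem heN]
            omega
          have hNc2 : 2 ≤ N.card := by omega
          set N2 : Finset (Sym2 V) := insert s(x,w) Nb with hN2
          have hN2pm : PM N2 := (hN.subset hNbN).insert hgnd hgdisj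
          have hN2card : N2.card = N.card - 1 := by
            rw [hN2, Finset.card_insert_of_notMem hgNb]; omega
          have hA2card : (A.erase s(y,z)).card = A.card - 1 :=
            Finset.card_erase_of_mem haA
          obtain ⟨A2', hpm, hsub, hcard, hcov⟩ :=
            ih (A.erase s(y,z)) N2 (by omega)
              (hA.subset (Finset.erase_subset _ _)) hN2pm (by omega)
          rw [hA2card] at hcard
          -- the clean base: everything except the pseudo-edge
          have hsubB : ∀ h' ∈ A2', h' ≠ s(x,w) → h' ∈ A.erase s(y,z) ∪ Nb := by
            intro h' hh' hne
            rcases Finset.mem_union.mp (hsub hh') with h1 | h1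
            · exact Finset.mem_union_left _ h1
            · rcases Finset.mem_insert.mp h1 with h2 | h2
              · exact absurd h2 hne
              · exact Finset.mem_union_right _ h2
          have hyB : ∀ h' ∈ A.erase s(y,z) ∪ Nb, y ∉ h' := by
            intro h' hh' hy
            rcases Finset.mem_union.mp hh' with h1 | h1
            · exact (Finset.mem_erase.mp h1).1 (hA.eq (Finset.mem_erase.mp h1).2 haA hy (by simp))
            · exact (Finset.mem_erase.mp (Finset.mem_erase.mp h1).2).1
                (hN.eq (Finset.mem_erase.mp (Finset.mem_erase.mp h1).2).2 heN hy (by simp))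
          have hzB : ∀ h' ∈ A.erase s(y,z) ∪ Nb, z ∉ h' := by
            intro h' hh' hz
            rcases Finset.mem_union.mp hh' with h1 | h1
            · exact (Finset.mem_erase.mp h1).1 (hA.eq (Finset.mem_erase.mp h1).2 haA hz (by simp))
            · exact (Finset.mem_erase.mp h1).1
                (hN.eq (Finset.mem_erase.mp (Finset.mem_erase.mp h1).2).2 hfN hz (by simp))
          by_cases hgmem : s(x,w) ∈ A2'
          · -- uncontract: replace the pseudo-edge by the two real edges e and f
            set D : Finset (Sym2 V) := A2'.erase s(x,w) with hD
            have hDsub : ∀ h' ∈ D, h' ∈ A.erase s(y,z) ∪ Nb := by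
              intro h' hh'
              exact hsubB h' (Finset.mem_erase.mp hh').2 (Finset.mem_erase.mp hh').1
            have hxD : ∀ h' ∈ D, x ∉ h' := by
              intro h' hh' hx
              exact (Finset.mem_erase.mp hh').1
                (hpm.eq (Finset.mem_erase.mp hh').2 hgmem hx (by simp))
            have hwD : ∀ h' ∈ D, w ∉ h' := by
              intro h' hh' hw
              exact (Finset.mem_erase.mp hh').1
                (hpm.eq (Finset.mem_erase.mp hh').2 hgmem hw (by simp))
            have hfdisj : ∀ v ∈ s(z,w), v ∉ cov D := by
              intro v hv hvc
              obtain ⟨h', hh', hvh'⟩ := mem_cov.mp hvc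
              rcases Sym2.mem_iff.mp hv with rfl | rfl
              · exact hzB h' (hDsub h' hh') hvh'
              · exact hwD h' hh' hvh'
            have hpm1 : PM (insert s(z,w) D) :=
              (hpm.subset (Finset.erase_subset _ _)).insert hfnd hfdisj
            have hedisj : ∀ v ∈ s(x,y), v ∉ cov (insert s(z,w) D) := by
              intro v hv hvc
              obtain ⟨h', hh', hvh'⟩ := mem_cov.mp hvc
              rcases Finset.mem_insert.mp hh' with h1 | h1
              · rcases Sym2.mem_iff.mp hv with rfl | rfl
                · exact hxf (h1 ▸ hvh')
                · exact hyf (h1 ▸ hvh')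
              · rcases Sym2.mem_iff.mp hv with rfl | rfl
                · exact hxD h' h1 hvh'
                · exact hyB h' (hDsub h' h1) hvh'
            have hpm2 : PM (insert s(x,y) (insert s(z,w) D)) := hpm1.insert hend hedisj
            have hfD : s(z,w) ∉ D := not_mem_of_disj hfnd hfdisj
            have heD : s(x,y) ∉ insert s(z,w) D := not_mem_of_disj hend hedisj
            have hDcard : D.card = A.card - 1 := by
              rw [hD, Finset.card_erase_of_mem hgmem, hcard]
              omega
            refine ⟨insert s(x,y) (insert s(z,w) D), hpm2, ?_, ?_, ?_⟩
            · intro h' hh'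
              rcases Finset.mem_insert.mp hh' with h1 | h1
              · exact h1 ▸ Finset.mem_union_right _ heN
              · rcases Finset.mem_insert.mp h1 with h2 | h2
                · exact h2 ▸ Finset.mem_union_right _ hfN
                · rcases Finset.mem_union.mp (hDsub h' h2) with h3 | h3
                  · exact Finset.mem_union_left _ (Finset.erase_subset _ _ h3)
                  · exact Finset.mem_union_right _ (hNbN h3)
            · rw [Finset.card_insert_of_notMem heD, Finset.card_insert_of_notMem hfD,
                hDcard]
              omega
            · intro v hv
              obtain ⟨h', hh', hvh'⟩ := mem_cov.mp hv
              by_cases hha : h' = s(y,z)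
              · rw [hha] at hvh'
                rcases Sym2.mem_iff.mp hvh' with h1 | h1
                · exact mem_cov.mpr ⟨s(x,y), Finset.mem_insert_self _ _, by rw [h1]; simp⟩
                · exact mem_cov.mpr ⟨s(z,w), Finset.mem_insert_of_mem (Finset.mem_insert_self _ _), by rw [h1]; simp⟩
              · have hv2 : v ∈ cov A2' := hcov (mem_cov.mpr ⟨h', Finset.mem_erase.mpr ⟨hha, hh'⟩, hvh'⟩)
                obtain ⟨h2, hh2, hvh2⟩ := mem_cov.mp hv2
                by_cases hhg : h2 = s(x,w)
                · rw [hhg] at hvh2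
                  rcases Sym2.mem_iff.mp hvh2 with h1 | h1
                  · exact mem_cov.mpr ⟨s(x,y), Finset.mem_insert_self _ _, by rw [h1]; simp⟩
                  · exact mem_cov.mpr ⟨s(z,w), Finset.mem_insert_of_mem (Finset.mem_insert_self _ _), by rw [h1]; simp⟩
                · exact mem_cov.mpr ⟨h2, Finset.mem_insert_of_mem (Finset.mem_insert_of_mem
                    (Finset.mem_erase.mpr ⟨hhg, hh2⟩)), hvh2⟩
          · -- the pseudo-edge is unused: put a back
            have hA2B : ∀ h' ∈ A2', h' ∈ A.erase s(y,z) ∪ Nb := by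
              intro h' hh'
              exact hsubB h' hh' (fun h => hgmem (h ▸ hh'))
            have hadisj : ∀ v ∈ s(y,z), v ∉ cov A2' := by
              intro v hv hvc
              obtain ⟨h', hh', hvh'⟩ := mem_cov.mp hvc
              rcases Sym2.mem_iff.mp hv with rfl | rfl
              · exact hyB h' (hA2B h' hh') hvh'
              · exact hzB h' (hA2B h' hh') hvh'
            have haA2' : s(y,z) ∉ A2' := not_mem_of_disj hand hadisj
            refine ⟨insert s(y,z) A2', hpm.insert hand hadisj, ?_, ?_, ?_⟩
            · intro h' hh'
              rcases Finset.mem_insert.mp hh' with h1 | h1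
              · exact h1 ▸ Finset.mem_union_left _ haA
              · rcases Finset.mem_union.mp (hA2B h' h1) with h3 | h3
                · exact Finset.mem_union_left _ (Finset.erase_subset _ _ h3)
                · exact Finset.mem_union_right _ (hNbN h3)
            · rw [Finset.card_insert_of_notMem haA2', hcard]; omega
            · intro v hv
              obtain ⟨h', hh', hvh'⟩ := mem_cov.mp hv
              by_cases hha : h' = s(y,z)
              · exact mem_cov.mpr ⟨s(y,z), Finset.mem_insert_self _ _, hha ▸ hvh'⟩
              · exact cov_mono (Finset.subset_insert _ _)
                  (hcov (mem_cov.mpr ⟨h', Finset.mem_erase.mpr ⟨hha, hh'⟩, hvh'⟩))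
        · -- z is N-free: drop the dead-end pair (a, e) and recurse
          have hA2card : (A.erase s(y,z)).card = A.card - 1 :=
            Finset.card_erase_of_mem haA
          have hN2card : (N.erase s(x,y)).card = N.card - 1 :=
            Finset.card_erase_of_mem heN
          obtain ⟨A2', hpm, hsub, hcard, hcov⟩ :=
            ih (A.erase s(y,z)) (N.erase s(x,y)) (by omega)
              (hA.subset (Finset.erase_subset _ _)) (hN.subset (Finset.erase_subset _ _))
              (by omega)
          rw [hA2card] at hcard
          have hadisj : ∀ v ∈ s(y,z), v ∉ cov A2' := by
            intro v hv hvc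
            obtain ⟨h', hh', hvh'⟩ := mem_cov.mp hvc
            rcases Finset.mem_union.mp (hsub hh') with h1 | h1
            · exact (Finset.mem_erase.mp h1).1
                (hA.eq (Finset.mem_erase.mp h1).2 haA hvh' hv)
            · rcases Sym2.mem_iff.mp hv with rfl | rfl
              · exact (Finset.mem_erase.mp h1).1
                  (hN.eq (Finset.mem_erase.mp h1).2 heN hvh' (by simp))
              · exact hzN (mem_cov.mpr ⟨h', (Finset.mem_erase.mp h1).2, hvh'⟩)
          have haA2' : s(y,z) ∉ A2' := not_mem_of_disj hand hadisj
          refine ⟨insert s(y,z) A2', hpm.insert hand hadisj, ?_, ?_, ?_⟩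
          · intro h' hh'
            rcases Finset.mem_insert.mp hh' with h1 | h1
            · exact h1 ▸ Finset.mem_union_left _ haA
            · rcases Finset.mem_union.mp (hsub h1) with h3 | h3
              · exact Finset.mem_union_left _ (Finset.erase_subset _ _ h3)
              · exact Finset.mem_union_right _ (Finset.erase_subset _ _ h3)
          · rw [Finset.card_insert_of_notMem haA2', hcard]; omega
          · intro v hv
            obtain ⟨h', hh', hvh'⟩ := mem_cov.mp hv
            by_cases hha : h' = s(y,z)
            · exact mem_cov.mpr ⟨s(y,z), Finset.mem_insert_self _ _, hha ▸ hvh'⟩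
            · exact cov_mono (Finset.subset_insert _ _)
                (hcov (mem_cov.mpr ⟨h', Finset.mem_erase.mpr ⟨hha, hh'⟩, hvh'⟩))

lemma sym2_exists_mem (e : Sym2 V) : ∃ v, v ∈ e := by
  induction e using Sym2.ind with
  | _ x y => exact ⟨x, by simp⟩

lemma count_one {n : ℕ} {parts : Fin n → Finset V}
    (hpart : ∀ v : V, ∃! i : Fin n, v ∈ parts i) (x y : V) :
    (Finset.univ.filter (fun i => ∀ w ∈ s(x,y), w ∈ parts i)).card +
    ((Finset.univ.filter (fun q : Fin n × Fin n => q.1 < q.2)).filter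
      (fun q => (∃ w ∈ s(x,y), w ∈ parts q.1) ∧ (∃ w ∈ s(x,y), w ∈ parts q.2))).card = 1 := by
  obtain ⟨i, hi, hiu⟩ := hpart x
  obtain ⟨j, hj, hju⟩ := hpart y
  have hwe : ∀ (k : Fin n), (∃ w ∈ s(x,y), w ∈ parts k) ↔ (k = i ∨ k = j) := by
    intro k
    constructor
    · rintro ⟨w, hw, hwk⟩
      rcases Sym2.mem_iff.mp hw with h | h
      · exact Or.inl (hiu k (h ▸ hwk))
      · exact Or.inr (hju k (h ▸ hwk))
    · rintro (rfl | rfl)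
      · exact ⟨x, by simp, hi⟩
      · exact ⟨y, by simp, hj⟩
  have hae : ∀ (k : Fin n), (∀ w ∈ s(x,y), w ∈ parts k) ↔ (k = i ∧ k = j) := by
    intro k
    constructor
    · intro h
      exact ⟨hiu k (h x (by simp)), hju k (h y (by simp))⟩
    · rintro ⟨rfl, h2⟩
      intro w hw
      rcases Sym2.mem_iff.mp hw with h | h
      · exact h ▸ hi
      · rw [h, h2]; exact hj
  by_cases hij : i = j
  · subst hij
    have h1 : (Finset.univ.filter (fun k => ∀ w ∈ s(x,y), w ∈ parts k)) = {i} := by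
      ext k
      simp only [Finset.mem_filter, Finset.mem_univ, true_and, Finset.mem_singleton, hae, and_self]
    have h2 : ((Finset.univ.filter (fun q : Fin n × Fin n => q.1 < q.2)).filter
        (fun q => (∃ w ∈ s(x,y), w ∈ parts q.1) ∧ (∃ w ∈ s(x,y), w ∈ parts q.2))) = ∅ := by
      ext q
      simp only [Finset.mem_filter, Finset.mem_univ, true_and, Finset.notMem_empty, iff_false]
      rintro ⟨hlt, hq1, hq2⟩
      simp only [hwe, or_self] at hq1 hq2
      rw [hq1, hq2] at hlt
      exact lt_irrefl _ hlt
    rw [h1, h2]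
    simp
  · have h1 : (Finset.univ.filter (fun k => ∀ w ∈ s(x,y), w ∈ parts k)) = ∅ := by
      ext k
      simp only [Finset.mem_filter, Finset.mem_univ, true_and, Finset.notMem_empty, iff_false, hae]
      rintro ⟨rfl, rfl⟩
      exact hij rfl
    rcases lt_trichotomy i j with hlt | heq | hgt
    · have h2 : ((Finset.univ.filter (fun q : Fin n × Fin n => q.1 < q.2)).filter
          (fun q => (∃ w ∈ s(x,y), w ∈ parts q.1) ∧ (∃ w ∈ s(x,y), w ∈ parts q.2))) = {(i, j)} := by
        ext q
        simp only [Finset.mem_filter, Finset.mem_univ, true_and, Finset.mem_singleton, hwe]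
        constructor
        · rintro ⟨hq, ha | ha, hb | hb⟩
          · rw [ha, hb] at hq; exact absurd hq (lt_irrefl _)
          · exact Prod.ext_iff.mpr ⟨ha, hb⟩
          · rw [ha, hb] at hq; exact absurd hq (asymm hlt)
          · rw [ha, hb] at hq; exact absurd hq (lt_irrefl _)
        · rintro rfl
          exact ⟨hlt, Or.inl rfl, Or.inr rfl⟩
      rw [h1, h2]
      simp
    · exact absurd heq hij
    · have h2 : ((Finset.univ.filter (fun q : Fin n × Fin n => q.1 < q.2)).filter
          (fun q => (∃ w ∈ s(x,y), w ∈ parts q.1) ∧ (∃ w ∈ s(x,y), w ∈ parts q.2))) = {(j, i)} := by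
        ext q
        simp only [Finset.mem_filter, Finset.mem_univ, true_and, Finset.mem_singleton, hwe]
        constructor
        · rintro ⟨hq, ha | ha, hb | hb⟩
          · rw [ha, hb] at hq; exact absurd hq (lt_irrefl _)
          · rw [ha, hb] at hq; exact absurd hq (asymm hgt)
          · exact Prod.ext_iff.mpr ⟨ha, hb⟩
          · rw [ha, hb] at hq; exact absurd hq (lt_irrefl _)
        · rintro rfl
          exact ⟨hgt, Or.inr rfl, Or.inl rfl⟩
      rw [h1, h2]
      simp

end Stmt7Aux

namespace Stmt7Aux

variable {V : Type*} [DecidableEq V]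

lemma mem_internalEdges {n : ℕ} {parts : Fin n → Finset V} {i : Fin n}
    {M : Finset (Sym2 V)} {e : Sym2 V} :
    e ∈ internalEdges parts i M ↔ e ∈ M ∧ ∀ v ∈ e, v ∈ parts i := by
  simp [internalEdges]

end Stmt7Aux

open Stmt7Aux in
/-- Given a maximum matching `M*`, there is a matching `M'` restricting to a maximum
matching on each `G[Vᵢ]` with
`Σᵢ|M'ᵢᵢ| + ½ Σ_{i<j}|M'ᵢⱼ| ≥ Σᵢ|M*ᵢᵢ| + ½ Σ_{i<j}|M*ᵢⱼ|`. -/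
theorem stmt_7 {V : Type*} [DecidableEq V] {n : ℕ} (G : SimpleGraph V)
    (parts : Fin n → Finset V)
    (hpart : ∀ v : V, ∃! i : Fin n, v ∈ parts i)
    (Mstar : Finset (Sym2 V)) (hMstar : IsMatching G Mstar)
    (hmax : ∀ N : Finset (Sym2 V), IsMatching G N → N.card ≤ Mstar.card) :
    ∃ M' : Finset (Sym2 V), IsMatching G M' ∧
      (∀ i : Fin n, ∀ N : Finset (Sym2 V), IsMatching G N →
        (∀ e ∈ N, ∀ v ∈ e, v ∈ parts i) → N.card ≤ (internalEdges parts i M').card) ∧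
      (∑ i : Fin n, ((internalEdges parts i M').card : ℚ)) +
        (1 / 2) * ∑ q ∈ Finset.univ.filter (fun q : Fin n × Fin n => q.1 < q.2),
          ((externalEdges parts q.1 q.2 M').card : ℚ) ≥
      (∑ i : Fin n, ((internalEdges parts i Mstar).card : ℚ)) +
        (1 / 2) * ∑ q ∈ Finset.univ.filter (fun q : Fin n × Fin n => q.1 < q.2),
          ((externalEdges parts q.1 q.2 Mstar).card : ℚ) := by
  classical
  have huniq : ∀ (v : V) (i j : Fin n), v ∈ parts i → v ∈ parts j → i = j :=
    fun v i j hi hj => (hpart v).unique hi hj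
  have hp1 : ∀ v : V, ∃ i, v ∈ parts i := fun v => ⟨(hpart v).choose, (hpart v).choose_spec.1⟩
  set U : Finset V := Finset.univ.biUnion parts with hU
  have hUmem : ∀ v : V, v ∈ U := by
    intro v
    obtain ⟨i, hi⟩ := hp1 v
    exact Finset.mem_biUnion.mpr ⟨i, Finset.mem_univ _, hi⟩
  have hsubU : ∀ M : Finset (Sym2 V), IsMatching G M → M ⊆ U.sym2 := by
    intro M hM e he
    exact Finset.mem_sym2_iff.mpr (fun a _ => hUmem a)
  have hPMof : ∀ M : Finset (Sym2 V), IsMatching G M → PM M := by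
    intro M hM
    exact ⟨fun e he => G.not_isDiag_of_mem_edgeSet (hM.1 (Finset.mem_coe.mpr he)), hM.2⟩
  set pairs : Finset (Fin n × Fin n) :=
    Finset.univ.filter (fun q : Fin n × Fin n => q.1 < q.2) with hpairs
  set ic : Finset (Sym2 V) → ℕ :=
    fun M => ∑ i : Fin n, (internalEdges parts i M).card with hic
  set ec : Finset (Sym2 V) → ℕ :=
    fun M => ∑ q ∈ pairs, (externalEdges parts q.1 q.2 M).card with hec
  have hicdef : ∀ M, ic M = ∑ i : Fin n, (internalEdges parts i M).card := fun M => by rw [hic]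
  have hecdef : ∀ M, ec M = ∑ q ∈ pairs, (externalEdges parts q.1 q.2 M).card :=
    fun M => by rw [hec]
  have hic_le : ∀ M : Finset (Sym2 V), ic M ≤ M.card := by
    intro M
    have hdisj : ∀ j₁ ∈ (Finset.univ : Finset (Fin n)), ∀ j₂ ∈ Finset.univ, j₁ ≠ j₂ →
        Disjoint (internalEdges parts j₁ M) (internalEdges parts j₂ M) := by
      intro j₁ _ j₂ _ hne
      rw [Finset.disjoint_left]
      intro e he1 he2
      obtain ⟨v, hv⟩ := sym2_exists_mem e
      exact hne (huniq v _ _ ((mem_internalEdges.mp he1).2 v hv)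
        ((mem_internalEdges.mp he2).2 v hv))
    calc ic M = (Finset.univ.biUnion (fun i => internalEdges parts i M)).card := by
          rw [hicdef M, Finset.card_biUnion hdisj]
      _ ≤ M.card := by
          apply Finset.card_le_card
          intro e he
          obtain ⟨i, _, hi⟩ := Finset.mem_biUnion.mp he
          exact (mem_internalEdges.mp hi).1
  have hkey : ∀ M : Finset (Sym2 V), IsMatching G M → ic M + ec M = M.card := by
    intro M hM
    have h1 : ic M = ∑ e ∈ M, (Finset.univ.filter (fun i => ∀ w ∈ e, w ∈ parts i)).card := by
      rw [hicdef M]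
      simp only [internalEdges]
      rw [Finset.sum_congr rfl (fun i _ => Finset.card_filter _ _), Finset.sum_comm]
      exact Finset.sum_congr rfl (fun e _ => (Finset.card_filter _ _).symm)
    have h2 : ec M = ∑ e ∈ M, (pairs.filter
        (fun q => (∃ w ∈ e, w ∈ parts q.1) ∧ (∃ w ∈ e, w ∈ parts q.2))).card := by
      rw [hecdef M]
      simp only [externalEdges]
      rw [Finset.sum_congr rfl (fun q _ => Finset.card_filter _ _), Finset.sum_comm]
      exact Finset.sum_congr rfl (fun e _ => (Finset.card_filter _ _).symm)
    have hone : ∀ e ∈ M, (Finset.univ.filter (fun i => ∀ w ∈ e, w ∈ parts i)).card +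
        (pairs.filter (fun q => (∃ w ∈ e, w ∈ parts q.1) ∧ (∃ w ∈ e, w ∈ parts q.2))).card
        = 1 := by
      intro e he
      induction e using Sym2.ind with
      | _ x y =>
        rw [hpairs]
        exact count_one hpart x y
    rw [h1, h2, ← Finset.sum_add_distrib, Finset.sum_congr rfl hone, Finset.sum_const,
      smul_eq_mul, mul_one]
  have hobj : ∀ M : Finset (Sym2 V), IsMatching G M →
      (∑ i : Fin n, ((internalEdges parts i M).card : ℚ)) +
        (1 / 2) * ∑ q ∈ pairs, ((externalEdges parts q.1 q.2 M).card : ℚ)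
      = ((M.card + ic M : ℕ) : ℚ) / 2 := by
    intro M hM
    have h1 : (∑ i : Fin n, ((internalEdges parts i M).card : ℚ)) = (ic M : ℚ) := by
      rw [hicdef M]
      push_cast
      ring
    have h2 : (∑ q ∈ pairs, ((externalEdges parts q.1 q.2 M).card : ℚ)) = (ec M : ℚ) := by
      rw [hecdef M]
      push_cast
      ring
    have h3 : (ic M : ℚ) + (ec M : ℚ) = (M.card : ℚ) := by
      exact_mod_cast congrArg (Nat.cast : ℕ → ℚ) (hkey M hM)
    rw [h1, h2]
    push_cast
    linarith
  set K : ℕ := U.sym2.card + 1 with hK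
  set Phi : Finset (Sym2 V) → ℕ := fun M => K * (M.card + ic M) + ic M with hPhi
  have hPhidef : ∀ M, Phi M = K * (M.card + ic M) + ic M := fun M => by rw [hPhi]
  set C : Finset (Finset (Sym2 V)) := U.sym2.powerset.filter (fun M => IsMatching G M)
    with hCdef
  have hmemC : ∀ M : Finset (Sym2 V), IsMatching G M → M ∈ C := by
    intro M hM
    rw [hCdef]
    exact Finset.mem_filter.mpr ⟨Finset.mem_powerset.mpr (hsubU M hM), hM⟩
  obtain ⟨M', hM'C, hmaxPhi⟩ := Finset.exists_max_image C Phi ⟨Mstar, hmemC Mstar hMstar⟩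
  have hM' : IsMatching G M' := by
    rw [hCdef] at hM'C
    exact (Finset.mem_filter.mp hM'C).2
  have hM'le : M'.card ≤ U.sym2.card := by
    rw [hCdef] at hM'C
    exact Finset.card_le_card (Finset.mem_powerset.mp (Finset.mem_filter.mp hM'C).1)
  have hicM'K : ic M' < K := by
    have := hic_le M'
    omega
  refine ⟨M', hM', ?_, ?_⟩
  · -- M' restricts to a maximum matching on each part
    intro i N hN hNparts
    by_contra hcon
    push_neg at hcon
    set A : Finset (Sym2 V) := internalEdges parts i M' with hA
    have hAsub : A ⊆ M' := by
      rw [hA]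
      exact Finset.filter_subset _ _
    have hApm : PM A := PM.subset hAsub (hPMof M' hM')
    have hNpm : PM N := hPMof N hN
    obtain ⟨A', hpm', hsubAN, hcard', hcov'⟩ :=
      aug (A.card + N.card) A N le_rfl hApm hNpm hcon
    have hA'parts : ∀ e ∈ A', ∀ v ∈ e, v ∈ parts i := by
      intro e he
      rcases Finset.mem_union.mp (hsubAN he) with h | h
      · exact (mem_internalEdges.mp (hA ▸ h)).2
      · exact hNparts e h
    have hA'edge : ∀ e ∈ A', e ∈ G.edgeSet := by
      intro e he
      rcases Finset.mem_union.mp (hsubAN he) with h | h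
      · exact hM'.1 (Finset.mem_coe.mpr (hAsub h))
      · exact hN.1 (Finset.mem_coe.mpr h)
    set S : Finset V := cov A' \ cov A with hS
    have hScard : S.card ≤ 2 := by
      rw [hS, Finset.card_sdiff_of_subset hcov', cov_card hpm', cov_card hApm, hcard']
      omega
    set R : Finset (Sym2 V) := (M' \ A).filter (fun f => ∃ v ∈ f, v ∈ S) with hR
    have hRM'A : R ⊆ M' \ A := by
      rw [hR]
      exact Finset.filter_subset _ _
    have hRcard : R.card ≤ 2 := by
      have hsub2 : R ⊆ S.biUnion (fun v => M'.filter (fun f => v ∈ f)) := by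
        intro f hf
        rw [hR, Finset.mem_filter] at hf
        obtain ⟨hf1, v, hvf, hvS⟩ := hf
        exact Finset.mem_biUnion.mpr ⟨v, hvS,
          Finset.mem_filter.mpr ⟨(Finset.mem_sdiff.mp hf1).1, hvf⟩⟩
      calc R.card ≤ (S.biUnion (fun v => M'.filter (fun f => v ∈ f))).card :=
            Finset.card_le_card hsub2
        _ ≤ ∑ v ∈ S, (M'.filter (fun f => v ∈ f)).card := Finset.card_biUnion_le
        _ ≤ ∑ _v ∈ S, 1 := Finset.sum_le_sum (fun v _ => Finset.card_le_one.mpr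
            (fun a ha b hb => hM'.2 v a (Finset.mem_filter.mp ha).1 b
              (Finset.mem_filter.mp hb).1 (Finset.mem_filter.mp ha).2
              (Finset.mem_filter.mp hb).2))
        _ ≤ 2 := by
            rw [Finset.sum_const, smul_eq_mul, mul_one]
            exact hScard
    set M2 : Finset (Sym2 V) := (M' \ (A ∪ R)) ∪ A' with hM2
    have hcross : ∀ e ∈ A', ∀ f ∈ M' \ (A ∪ R), ∀ v : V, v ∈ e → v ∈ f → False := by
      intro e he f hf v hve hvf
      have hf' := Finset.mem_sdiff.mp hf
      have hvA' : v ∈ cov A' := mem_cov.mpr ⟨e, he, hve⟩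
      by_cases hva : v ∈ cov A
      · obtain ⟨a, haA, hva'⟩ := mem_cov.mp hva
        have hfa : f = a := hM'.2 v f hf'.1 a (hAsub haA) hvf hva'
        exact hf'.2 (Finset.mem_union_left _ (hfa ▸ haA))
      · have hvS : v ∈ S := by
          rw [hS]
          exact Finset.mem_sdiff.mpr ⟨hvA', hva⟩
        have hfA : f ∉ A := fun h => hf'.2 (Finset.mem_union_left _ h)
        apply hf'.2
        apply Finset.mem_union_right
        rw [hR]
        exact Finset.mem_filter.mpr ⟨Finset.mem_sdiff.mpr ⟨hf'.1, hfA⟩, ⟨v, hvf, hvS⟩⟩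
    have hdisjM2 : Disjoint (M' \ (A ∪ R)) A' := by
      rw [Finset.disjoint_right]
      intro e heA' heM
      obtain ⟨v, hv⟩ := sym2_exists_mem e
      exact hcross e heA' e heM v hv hv
    have hM2match : IsMatching G M2 := by
      constructor
      · intro e he
        have he' : e ∈ M2 := Finset.mem_coe.mp he
        rw [hM2] at he'
        rcases Finset.mem_union.mp he' with h | h
        · exact hM'.1 (Finset.mem_coe.mpr (Finset.mem_sdiff.mp h).1)
        · exact hA'edge e h
      · intro v e he f hf hve hvf
        rw [hM2] at he hf
        rcases Finset.mem_union.mp he with h1 | h1 <;> rcases Finset.mem_union.mp hf with h2 | h2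
        · exact hM'.2 v e (Finset.mem_sdiff.mp h1).1 f (Finset.mem_sdiff.mp h2).1 hve hvf
        · exact (hcross f h2 e h1 v hvf hve).elim
        · exact (hcross e h1 f h2 v hve hvf).elim
        · exact hpm'.eq h1 h2 hve hvf
    have hdAR : Disjoint A R := by
      rw [Finset.disjoint_left]
      intro e heA heR
      exact (Finset.mem_sdiff.mp (hRM'A heR)).2 heA
    have hca : (A ∪ R).card = A.card + R.card := Finset.card_union_of_disjoint hdAR
    have hARM' : A ∪ R ⊆ M' := Finset.union_subset hAsub (hRM'A.trans Finset.sdiff_subset)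
    have hc1 : (M' \ (A ∪ R)).card = M'.card - (A.card + R.card) := by
      rw [Finset.card_sdiff_of_subset hARM', hca]
    have hc2 : M2.card = (M' \ (A ∪ R)).card + A'.card := by
      rw [hM2, Finset.card_union_of_disjoint hdisjM2]
    have hARle : A.card + R.card ≤ M'.card := by
      rw [← hca]
      exact Finset.card_le_card hARM'
    have hinti : internalEdges parts i M2 = A' := by
      ext e
      constructor
      · intro he
        obtain ⟨hmem, hpred⟩ := mem_internalEdges.mp he
        rw [hM2] at hmem
        rcases Finset.mem_union.mp hmem with h1 | h1
        · exfalso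
          have heA : e ∈ A := hA.symm ▸
            (mem_internalEdges.mpr ⟨(Finset.mem_sdiff.mp h1).1, hpred⟩)
          exact (Finset.mem_sdiff.mp h1).2 (Finset.mem_union_left _ heA)
        · exact h1
      · intro he
        refine mem_internalEdges.mpr ⟨?_, hA'parts e he⟩
        rw [hM2]
        exact Finset.mem_union_right _ he
    have hintj : ∀ j : Fin n, j ≠ i → internalEdges parts j M2 = internalEdges parts j M' := by
      intro j hj
      ext e
      rw [mem_internalEdges, mem_internalEdges]
      constructor
      · rintro ⟨hmem, hpred⟩
        rw [hM2] at hmem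
        rcases Finset.mem_union.mp hmem with h1 | h1
        · exact ⟨(Finset.mem_sdiff.mp h1).1, hpred⟩
        · obtain ⟨v, hv⟩ := sym2_exists_mem e
          exact absurd (huniq v _ _ (hpred v hv) (hA'parts e h1 v hv)) hj
      · rintro ⟨hmem, hpred⟩
        constructor
        · rw [hM2]
          apply Finset.mem_union_left
          refine Finset.mem_sdiff.mpr ⟨hmem, ?_⟩
          intro hmem2
          rcases Finset.mem_union.mp hmem2 with h1 | h1
          · obtain ⟨v, hv⟩ := sym2_exists_mem e
            exact hj (huniq v _ _ (hpred v hv) ((mem_internalEdges.mp (hA ▸ h1)).2 v hv))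
          · rw [hR, Finset.mem_filter] at h1
            obtain ⟨_, v, hvf, hvS⟩ := h1
            have hvA' : v ∈ cov A' := (Finset.mem_sdiff.mp (hS ▸ hvS)).1
            obtain ⟨e', he', hve'⟩ := mem_cov.mp hvA'
            exact hj (huniq v _ _ (hpred v hvf) (hA'parts e' he' v hve'))
        · exact hpred
    have hicM2 : ic M2 = ic M' + 1 := by
      have hsplit : ∀ M : Finset (Sym2 V),
          ic M = ∑ j ∈ Finset.univ.erase i, (internalEdges parts j M).card +
            (internalEdges parts i M).card := by
        intro M
        rw [hicdef M]
        exact (Finset.sum_erase_add _ _ (Finset.mem_univ i)).symm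
      rw [hsplit M2, hsplit M',
        Finset.sum_congr rfl (fun j hj => by rw [hintj j (Finset.mem_erase.mp hj).1]),
        hinti, ← hA, hcard']
      omega
    have hPhiLe : Phi M2 ≤ Phi M' := hmaxPhi M2 (hmemC M2 hM2match)
    have hX : M'.card + ic M' ≤ M2.card + ic M2 := by omega
    have hPhiGt : Phi M' < Phi M2 := by
      rw [hPhidef M', hPhidef M2]
      rcases eq_or_lt_of_le hX with hEq | hLt
      · rw [hEq]
        omega
      · have h2 : K * (M'.card + ic M') + K ≤ K * (M2.card + ic M2) := by
          have h3 := Nat.mul_le_mul_left K (Nat.succ_le_of_lt hLt)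
          rw [Nat.mul_succ] at h3
          exact h3
        omega
    omega
  · -- the weighted objective inequality
    have h1 := hmaxPhi Mstar (hmemC Mstar hMstar)
    have hX : Mstar.card + ic Mstar ≤ M'.card + ic M' := by
      by_contra hcon
      push_neg at hcon
      have h2 : K * (M'.card + ic M') + K ≤ K * (Mstar.card + ic Mstar) := by
        have h3 := Nat.mul_le_mul_left K (Nat.succ_le_of_lt hcon)
        rw [Nat.mul_succ] at h3
        exact h3
      rw [hPhidef Mstar, hPhidef M'] at h1
      omega
    rw [ge_iff_le, hobj Mstar hMstar, hobj M' hM']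
    have h4 : ((Mstar.card + ic Mstar : ℕ) : ℚ) ≤ ((M'.card + ic M' : ℕ) : ℚ) :=
      Nat.cast_le.mpr hX
    linarith
end

section
/- The Mix-and-Match mechanism provides a 2-approximation to the maximum matching: for any graph G with vertex partition V = V_1 ∪ … ∪ V_n, the expectation over a uniformly random bipartition Π of the size of a maximum matching among matchings that (i) restrict to maximum matchings on each G[V_i] and (ii) contain no edge between V_i and V_j with i, j on the same side of Π, is at least |M*|/2, where M* is a maximum matching of G. -/
open Finset
open scoped Classical symmDiff

/-- `M` is `π`-feasible: it is a matching of `G`, restricts to a maximum cardinality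
matching inside each `Vᵢ`, and contains no edge between `Vᵢ` and `Vⱼ` for distinct
`i, j` on the same side of the bipartition `π`. -/
def Feasible {V : Type*} {n : ℕ} (G : SimpleGraph V) (parts : Fin n → Finset V)
    (π : Fin n → Bool) (M : Finset (Sym2 V)) : Prop :=
  IsMatching G M ∧
  (∀ i : Fin n, ∀ N : Finset (Sym2 V), IsMatching G N →
    (∀ e ∈ N, ∀ v ∈ e, v ∈ parts i) →
    N.card ≤ (M.filter (fun e => ∀ v ∈ e, v ∈ parts i)).card) ∧
  (∀ i j : Fin n, i ≠ j → π i = π j → ∀ e ∈ M,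
    ¬ ((∃ v ∈ e, v ∈ parts i) ∧ (∃ v ∈ e, v ∈ parts j)))


noncomputable def sverts {V : Type*} [DecidableEq V] (e : Sym2 V) : Finset V :=
  Sym2.lift ⟨fun a b => {a, b}, fun a b => Finset.pair_comm a b⟩ e

lemma mem_sverts {V : Type*} [DecidableEq V] (e : Sym2 V) (v : V) :
    v ∈ sverts e ↔ v ∈ e := by
  obtain ⟨⟨a, b⟩, rfl⟩ := Quot.exists_rep e
  simp [sverts, Sym2.mem_iff]

lemma card_sverts {V : Type*} [DecidableEq V] (e : Sym2 V) : (sverts e).card ≤ 2 := by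
  obtain ⟨⟨a, b⟩, rfl⟩ := Quot.exists_rep e
  show ({a, b} : Finset V).card ≤ 2
  exact (Finset.card_insert_le _ _).trans (by simp)

lemma count_ne {n : ℕ} {i j : Fin n} (hij : i ≠ j) :
    2 * (Finset.univ.filter (fun π : Fin n → Bool => π i ≠ π j)).card = 2 ^ n := by
  have hbij : (Finset.univ.filter (fun π : Fin n → Bool => π i ≠ π j)).card
      = (Finset.univ.filter (fun π : Fin n → Bool => ¬ (π i ≠ π j))).card := by
    refine Finset.card_bij' (fun π _ => Function.update π i (!π i))
      (fun π _ => Function.update π i (!π i)) ?_ ?_ ?_ ?_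
    · intro π hπ
      simp only [Finset.mem_filter, Finset.mem_univ, true_and] at hπ ⊢
      rw [Function.update_self, Function.update_of_ne (Ne.symm hij)]
      rw [not_ne_iff]
      cases h1 : π i <;> cases h2 : π j <;> simp_all
    · intro π hπ
      simp only [Finset.mem_filter, Finset.mem_univ, true_and, not_ne_iff] at hπ ⊢
      rw [Function.update_self, Function.update_of_ne (Ne.symm hij), hπ]
      cases π j <;> simp
    · intro π _
      simp only [Function.update_self, Function.update_idem, Bool.not_not,
        Function.update_eq_self]
    · intro π _
      simp only [Function.update_self, Function.update_idem, Bool.not_not,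
        Function.update_eq_self]
  have htot := Finset.card_filter_add_card_filter_not
    (s := (Finset.univ : Finset (Fin n → Bool))) (fun π => π i ≠ π j)
  rw [Finset.card_univ] at htot
  have hcard : Fintype.card (Fin n → Bool) = 2 ^ n := by
    rw [Fintype.card_fun]; simp
  rw [hcard] at htot
  rw [two_mul]
  nth_rewrite 2 [hbij]
  exact htot

/-- Mix-and-Match is a 2-approximation: the expectation, over a uniformly random
bipartition `π` of the agents, of the size of a maximum `π`-feasible matching is at
least half the size of a maximum matching of `G`. -/
theorem stmt_10 {V : Type*} [DecidableEq V] {n : ℕ} (G : SimpleGraph V)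
    (parts : Fin n → Finset V)
    (hpart : ∀ v : V, ∃! i : Fin n, v ∈ parts i)
    (Mstar : Finset (Sym2 V)) (hMstar : IsMatching G Mstar)
    (hmax : ∀ N : Finset (Sym2 V), IsMatching G N → N.card ≤ Mstar.card)
    (Mmm : (Fin n → Bool) → Finset (Sym2 V))
    (hfeas : ∀ π : Fin n → Bool, Feasible G parts π (Mmm π))
    (hopt : ∀ (π : Fin n → Bool) (N : Finset (Sym2 V)),
      Feasible G parts π N → N.card ≤ (Mmm π).card) :
    (∑ π : Fin n → Bool, ((Mmm π).card : ℚ)) / 2 ^ n ≥ (Mstar.card : ℚ) / 2 := by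
  classical
  set p : V → Fin n := fun v => (hpart v).choose with hp
  have hpmem : ∀ v : V, v ∈ parts (p v) := fun v => (hpart v).choose_spec.1
  have hpuniq : ∀ (v : V) (i : Fin n), v ∈ parts i → i = p v :=
    fun v i h => (hpart v).choose_spec.2 i h
  -- the collection of internal matchings of part i
  set F : Fin n → Finset (Finset (Sym2 V)) := fun i =>
    ((parts i ×ˢ parts i).image fun x : V × V => s(x.1, x.2)).powerset.filter
      (fun N => IsMatching G N ∧ ∀ e ∈ N, ∀ v ∈ e, v ∈ parts i) with hF
  have hmemF : ∀ (i : Fin n) (N : Finset (Sym2 V)), IsMatching G N →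
      (∀ e ∈ N, ∀ v ∈ e, v ∈ parts i) → N ∈ F i := by
    intro i N hN hint
    rw [hF]
    simp only [Finset.mem_filter, Finset.mem_powerset]
    refine ⟨?_, hN, hint⟩
    intro e he
    obtain ⟨⟨a, b⟩, rfl⟩ := Quot.exists_rep e
    refine Finset.mem_image.2 ⟨(a, b), ?_, rfl⟩
    rw [Finset.mem_product]
    exact ⟨hint _ he a (Sym2.mem_mk_left a b), hint _ he b (Sym2.mem_mk_right a b)⟩
  have hFne : ∀ i : Fin n, (F i).Nonempty := by
    intro i
    exact ⟨∅, hmemF i ∅ ⟨by simp, by simp⟩ (by simp)⟩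
  choose Mi hMiF hMimax using fun i => Finset.exists_max_image (F i) Finset.card (hFne i)
  have hMi_match : ∀ i, IsMatching G (Mi i) := fun i => ((Finset.mem_filter.1 (hMiF i)).2).1
  have hMi_int : ∀ i, ∀ e ∈ Mi i, ∀ v ∈ e, v ∈ parts i :=
    fun i => ((Finset.mem_filter.1 (hMiF i)).2).2
  have hMi_max : ∀ (i : Fin n) (N : Finset (Sym2 V)), IsMatching G N →
      (∀ e ∈ N, ∀ v ∈ e, v ∈ parts i) → N.card ≤ (Mi i).card :=
    fun i N h1 h2 => hMimax i N (hmemF i N h1 h2)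
  -- the union of the internal maximum matchings
  set B : Finset (Sym2 V) := Finset.univ.biUnion Mi with hB
  have hB_match : IsMatching G B := by
    constructor
    · intro e he
      rw [Finset.mem_coe] at he
      obtain ⟨i, _, hei⟩ := Finset.mem_biUnion.1 he
      exact (hMi_match i).1 hei
    · intro v e he f hf hve hvf
      obtain ⟨i, _, hei⟩ := Finset.mem_biUnion.1 he
      obtain ⟨j, _, hfj⟩ := Finset.mem_biUnion.1 hf
      have hijv : i = j := by
        rw [hpuniq v i (hMi_int i e hei v hve), hpuniq v j (hMi_int j f hfj v hvf)]
      subst hijv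
      exact (hMi_match i).2 v e hei f hfj hve hvf
  -- edges of Mstar entirely uncovered by B
  set S : Finset (Sym2 V) := Mstar.filter (fun e => ∀ v ∈ e, ¬ Covers B v) with hS
  have hS_sub : S ⊆ Mstar := Finset.filter_subset _ _
  have hS_unc : ∀ e ∈ S, ∀ v ∈ e, ¬ Covers B v := fun e he => (Finset.mem_filter.1 he).2
  -- edges of S go between two distinct parts
  have hSparts : ∀ e ∈ S, ∀ a b : V, e = s(a, b) → p a ≠ p b := by
    intro e he a b heab hab
    have heM : e ∈ Mstar := hS_sub he
    have hunc : ∀ v ∈ e, ¬ Covers B v := hS_unc e he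
    have heE : e ∈ G.edgeSet := hMstar.1 heM
    have hae : a ∈ e := by rw [heab]; exact Sym2.mem_mk_left a b
    have hbe : b ∈ e := by rw [heab]; exact Sym2.mem_mk_right a b
    have hai : a ∈ parts (p a) := hpmem a
    have hbi : b ∈ parts (p a) := by rw [hab]; exact hpmem b
    have hnotmem : e ∉ Mi (p a) := by
      intro hmem
      exact hunc a hae ⟨e, Finset.mem_biUnion.2 ⟨p a, Finset.mem_univ _, hmem⟩, hae⟩
    have hbig : IsMatching G (insert e (Mi (p a))) := by
      constructor
      · intro f hf
        rw [Finset.mem_coe] at hf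
        rcases Finset.mem_insert.1 hf with rfl | hf
        · exact heE
        · exact (hMi_match (p a)).1 hf
      · intro v f hfm g hgm hvf hvg
        rcases Finset.mem_insert.1 hfm with rfl | hf
        · rcases Finset.mem_insert.1 hgm with rfl | hg
          · rfl
          · exact absurd ⟨g, Finset.mem_biUnion.2 ⟨p a, Finset.mem_univ _, hg⟩, hvg⟩
              (hunc v hvf)
        · rcases Finset.mem_insert.1 hgm with rfl | hg
          · exact absurd ⟨f, Finset.mem_biUnion.2 ⟨p a, Finset.mem_univ _, hf⟩, hvf⟩
              (hunc v hvg)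
          · exact (hMi_match (p a)).2 v f hf g hg hvf hvg
    have hbigint : ∀ f ∈ insert e (Mi (p a)), ∀ v ∈ f, v ∈ parts (p a) := by
      intro f hf v hv
      rcases Finset.mem_insert.1 hf with rfl | hf
      · rw [heab] at hv
        rcases Sym2.mem_iff.1 hv with rfl | rfl
        · exact hai
        · exact hbi
      · exact hMi_int (p a) f hf v hv
    have hle := hMi_max (p a) _ hbig hbigint
    rw [Finset.card_insert_of_notMem hnotmem] at hle
    omega
  -- edges of S that become available under π
  set cnd : Sym2 V → (Fin n → Bool) → Prop :=
    fun e π => ∃ a b : V, e = s(a, b) ∧ π (p a) ≠ π (p b) with hcnd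
  set SP : (Fin n → Bool) → Finset (Sym2 V) := fun π => S.filter (fun e => cnd e π) with hSP
  have hSP_sub : ∀ π, SP π ⊆ S := fun π => Finset.filter_subset _ _
  -- feasibility of B ∪ SP π
  have hNfeas : ∀ π, Feasible G parts π (B ∪ SP π) := by
    intro π
    refine ⟨⟨?_, ?_⟩, ?_, ?_⟩
    · intro e he
      rw [Finset.mem_coe] at he
      rcases Finset.mem_union.1 he with he | he
      · exact hB_match.1 he
      · exact hMstar.1 (hS_sub (hSP_sub π he))
    · intro v e he f hf hve hvf
      rcases Finset.mem_union.1 he with he | he <;> rcases Finset.mem_union.1 hf with hf | hf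
      · exact hB_match.2 v e he f hf hve hvf
      · exact absurd ⟨e, he, hve⟩ (hS_unc f (hSP_sub π hf) v hvf)
      · exact absurd ⟨f, hf, hvf⟩ (hS_unc e (hSP_sub π he) v hve)
      · exact hMstar.2 v e (hS_sub (hSP_sub π he)) f (hS_sub (hSP_sub π hf)) hve hvf
    · intro i N hN hint
      refine (hMi_max i N hN hint).trans (Finset.card_le_card ?_)
      intro e he
      rw [Finset.mem_filter]
      exact ⟨Finset.mem_union_left _ (Finset.mem_biUnion.2 ⟨i, Finset.mem_univ i, he⟩),
        hMi_int i e he⟩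
    · rintro i j hij hπ e he ⟨⟨u, hue, hui⟩, ⟨w, hwe, hwj⟩⟩
      rcases Finset.mem_union.1 he with he | he
      · obtain ⟨k, _, hek⟩ := Finset.mem_biUnion.1 he
        apply hij
        rw [hpuniq u i hui, ← hpuniq u k (hMi_int k e hek u hue),
          hpuniq w k (hMi_int k e hek w hwe), ← hpuniq w j hwj]
      · obtain ⟨a, b, heab, hne⟩ := (Finset.mem_filter.1 he).2
        have hiab : i = p a ∨ i = p b := by
          have hu : u = a ∨ u = b := by rw [heab] at hue; exact Sym2.mem_iff.1 hue
          rcases hu with rfl | rfl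
          · exact Or.inl (hpuniq u i hui)
          · exact Or.inr (hpuniq u i hui)
        have hjab : j = p a ∨ j = p b := by
          have hw : w = a ∨ w = b := by rw [heab] at hwe; exact Sym2.mem_iff.1 hwe
          rcases hw with rfl | rfl
          · exact Or.inl (hpuniq w j hwj)
          · exact Or.inr (hpuniq w j hwj)
        rcases hiab with h | h <;> rcases hjab with h' | h'
        · exact hij (h.trans h'.symm)
        · exact hne (by rw [← h, ← h']; exact hπ)
        · exact hne (by rw [← h', ← h]; exact hπ.symm)
        · exact hij (h.trans h'.symm)
  -- lower bound per π
  have hdisj : ∀ π, Disjoint B (SP π) := by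
    intro π
    rw [Finset.disjoint_left]
    intro e heB heS
    obtain ⟨⟨a, b⟩, rfl⟩ := Quot.exists_rep e
    exact hS_unc _ (hSP_sub π heS) a (Sym2.mem_mk_left a b) ⟨_, heB, Sym2.mem_mk_left a b⟩
  have hlow : ∀ π, B.card + (SP π).card ≤ (Mmm π).card := by
    intro π
    rw [← Finset.card_union_of_disjoint (hdisj π)]
    exact hopt π _ (hNfeas π)
  -- counting bipartitions separating a given edge of S
  have hcnt : ∀ e ∈ S,
      2 * (Finset.univ.filter (fun π : Fin n → Bool => cnd e π)).card = 2 ^ n := by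
    intro e he
    obtain ⟨⟨a, b⟩, rfl⟩ := Quot.exists_rep e
    have hne : p a ≠ p b := hSparts _ he a b rfl
    have hfe : (Finset.univ.filter (fun π : Fin n → Bool => cnd s(a, b) π))
        = (Finset.univ.filter (fun π : Fin n → Bool => π (p a) ≠ π (p b))) := by
      apply Finset.filter_congr
      intro π _
      constructor
      · rintro ⟨a', b', hab, hne'⟩
        rcases Sym2.eq_iff.1 hab with ⟨rfl, rfl⟩ | ⟨rfl, rfl⟩
        · exact hne'
        · exact hne'.symm
      · intro h
        exact ⟨a, b, rfl, h⟩
    rw [hfe]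
    exact count_ne hne
  -- summing over π
  have hcardfun : Fintype.card (Fin n → Bool) = 2 ^ n := by
    rw [Fintype.card_fun]; simp
  have hsum2 : 2 * ∑ π : Fin n → Bool, (SP π).card = 2 ^ n * S.card := by
    have h1 : ∀ π : Fin n → Bool, (SP π).card = ∑ e ∈ S, if cnd e π then 1 else 0 :=
      fun π => Finset.card_filter _ _
    calc 2 * ∑ π : Fin n → Bool, (SP π).card
        = 2 * ∑ π : Fin n → Bool, ∑ e ∈ S, if cnd e π then 1 else 0 := by
          rw [Finset.sum_congr rfl (fun π _ => h1 π)]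
      _ = ∑ e ∈ S, 2 * ∑ π : Fin n → Bool, if cnd e π then 1 else 0 := by
          rw [Finset.sum_comm, ← Finset.mul_sum]
      _ = ∑ e ∈ S, 2 * (Finset.univ.filter (fun π : Fin n → Bool => cnd e π)).card := by
          refine Finset.sum_congr rfl fun e _ => ?_
          rw [Finset.card_filter]
      _ = ∑ _e ∈ S, 2 ^ n := Finset.sum_congr rfl hcnt
      _ = 2 ^ n * S.card := by rw [Finset.sum_const, smul_eq_mul, mul_comm]
  -- covering bound : |Mstar| ≤ 2|B| + |S|
  have hcover : Mstar.card ≤ 2 * B.card + S.card := by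
    have h1 : (Mstar \ S).card + S.card = Mstar.card := Finset.card_sdiff_add_card_eq_card hS_sub
    have h2 : (Mstar \ S).card ≤ 2 * B.card := by
      have hVBcard : (B.biUnion sverts).card ≤ 2 * B.card :=
        calc (B.biUnion sverts).card ≤ ∑ e ∈ B, (sverts e).card := Finset.card_biUnion_le
          _ ≤ ∑ _e ∈ B, 2 := Finset.sum_le_sum (fun e _ => card_sverts e)
          _ = 2 * B.card := by rw [Finset.sum_const, smul_eq_mul, mul_comm]
      refine le_trans ?_ hVBcard
      refine Finset.card_le_card_of_surjOn
        (fun v => if h : ∃ f ∈ Mstar, v ∈ f then h.choose else s(v, v)) ?_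
      intro e he
      simp only [Finset.mem_coe, Finset.mem_sdiff] at he
      obtain ⟨heM, heS⟩ := he
      have hex0 : ∃ v ∈ e, Covers B v := by
        by_contra hcon
        push_neg at hcon
        exact heS (Finset.mem_filter.2 ⟨heM, hcon⟩)
      obtain ⟨v, hve, hcov⟩ := hex0
      obtain ⟨f, hfB, hvf⟩ := hcov
      refine ⟨v, Finset.mem_coe.2 (Finset.mem_biUnion.2 ⟨f, hfB, (mem_sverts f v).2 hvf⟩), ?_⟩
      have hex : ∃ f ∈ Mstar, v ∈ f := ⟨e, heM, hve⟩
      show (if h : ∃ f ∈ Mstar, v ∈ f then h.choose else s(v, v)) = e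
      rw [dif_pos hex]
      obtain ⟨hc1, hc2⟩ := hex.choose_spec
      exact hMstar.2 v _ hc1 e heM hc2 hve
    omega
  -- putting it all together over ℕ
  have hkey : 2 ^ n * Mstar.card ≤ 2 * ∑ π : Fin n → Bool, (Mmm π).card := by
    have h1 : ∑ π : Fin n → Bool, (B.card + (SP π).card)
        ≤ ∑ π : Fin n → Bool, (Mmm π).card :=
      Finset.sum_le_sum (fun π _ => hlow π)
    have h2 : ∑ π : Fin n → Bool, (B.card + (SP π).card)
        = 2 ^ n * B.card + ∑ π : Fin n → Bool, (SP π).card := by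
      rw [Finset.sum_add_distrib, Finset.sum_const, Finset.card_univ, hcardfun, smul_eq_mul]
    calc 2 ^ n * Mstar.card ≤ 2 ^ n * (2 * B.card + S.card) := Nat.mul_le_mul_left _ hcover
      _ = 2 * (2 ^ n * B.card) + 2 ^ n * S.card := by ring
      _ = 2 * (2 ^ n * B.card) + 2 * ∑ π : Fin n → Bool, (SP π).card := by rw [hsum2]
      _ = 2 * (2 ^ n * B.card + ∑ π : Fin n → Bool, (SP π).card) := by ring
      _ = 2 * ∑ π : Fin n → Bool, (B.card + (SP π).card) := by rw [h2]
      _ ≤ 2 * ∑ π : Fin n → Bool, (Mmm π).card := Nat.mul_le_mul_left _ h1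
  rw [ge_iff_le, div_le_div_iff₀ (by norm_num) (by positivity)]
  have hq : ((2 ^ n * Mstar.card : ℕ) : ℚ) ≤ ((2 * ∑ π : Fin n → Bool, (Mmm π).card : ℕ) : ℚ) :=
    Nat.cast_le.2 hkey
  push_cast at hq
  linarith
end
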